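/- arXiv:1312.2890 — 2 statements merged into one kernel-verified Lean document; each statement's English description precedes it below -/
import Mathlib

section
/- For real β with 1 ≤ β ≤ 3/2, real k, and any positive integer n, the upper incomplete gamma function satisfies |Γ(β + 1 + ik, πn²)| < 2π²n⁴ e^{-πn²}. -/
open Complex Real MeasureTheory Set Filter

lemma aux_deriv (x : ℝ) :
    HasDerivAt (fun t : ℝ => -(t^2 + 2*t + 2) * Real.exp (-t)) (Real.exp (-x) * x^2) x := by
  have h1 : HasDerivAt (fun t : ℝ => -(t^2 + 2*t + 2)) (-(2*x + 2)) x := by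
    have := ((hasDerivAt_pow 2 x).fun_add (((hasDerivAt_id x).const_mul 2).add_const 2)).fun_neg
    simpa [add_assoc, add_comm, add_left_comm, mul_comm] using this
  have h2 : HasDerivAt (fun t : ℝ => Real.exp (-t)) (-Real.exp (-x)) x := by
    simpa using (hasDerivAt_neg x).exp
  have := h1.fun_mul h2
  refine this.congr_deriv ?_
  ring

lemma aux_tendsto :
    Tendsto (fun t : ℝ => -(t^2 + 2*t + 2) * Real.exp (-t)) atTop (nhds 0) := by
  have h2 := tendsto_pow_mul_exp_neg_atTop_nhds_zero 2
  have h1 := tendsto_pow_mul_exp_neg_atTop_nhds_zero 1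
  have h0 := tendsto_pow_mul_exp_neg_atTop_nhds_zero 0
  have h := ((h2.add (h1.const_mul 2)).add (h0.const_mul 2)).neg
  have heq : (fun t : ℝ => -(t^2 + 2*t + 2) * Real.exp (-t)) =
      fun t : ℝ => -((t^2 * Real.exp (-t)) + 2 * (t^1 * Real.exp (-t))
        + 2 * (t^0 * Real.exp (-t))) := by
    funext t; ring
  rw [heq]
  simpa using h

lemma aux_integral (a : ℝ) :
    IntegrableOn (fun x : ℝ => Real.exp (-x) * x^2) (Ioi a) ∧
    ∫ x in Ioi a, Real.exp (-x) * x^2 = (a^2 + 2*a + 2) * Real.exp (-a) := by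
  have hderiv : ∀ x ∈ Ioi a, HasDerivAt (fun t : ℝ => -(t^2 + 2*t + 2) * Real.exp (-t))
      (Real.exp (-x) * x^2) x := fun x _ => aux_deriv x
  have hcont : Continuous (fun t : ℝ => -(t^2 + 2*t + 2) * Real.exp (-t)) := by fun_prop
  have hnonneg : ∀ x ∈ Ioi a, 0 ≤ Real.exp (-x) * x^2 := fun x _ =>
    mul_nonneg (Real.exp_pos _).le (sq_nonneg x)
  refine ⟨integrableOn_Ioi_deriv_of_nonneg hcont.continuousWithinAt hderiv hnonneg aux_tendsto, ?_⟩
  rw [integral_Ioi_of_hasDerivAt_of_nonneg hcont.continuousWithinAt hderiv hnonneg aux_tendsto]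
  ring

/-- For `1 ≤ β ≤ 3/2`, real `k`, and any positive integer `n`, the upper incomplete
gamma function satisfies `|Γ(β+1+ik, πn²)| < 2π²n⁴ e^{-πn²}`. -/
theorem stmt_11 (β : ℝ) (hβ₁ : 1 ≤ β) (hβ₂ : β ≤ 3 / 2) (k : ℝ) (n : ℕ) (hn : 1 ≤ n) :
    ‖(∫ l in Set.Ioi (π * (n : ℝ) ^ 2),
        (Real.exp (-l) : ℂ) * (l : ℂ) ^ ((β : ℂ) + Complex.I * k))‖ <
      2 * π ^ 2 * (n : ℝ) ^ 4 * Real.exp (-π * (n : ℝ) ^ 2) := by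
  set a : ℝ := π * (n : ℝ) ^ 2 with ha
  have hn1 : (1 : ℝ) ≤ (n : ℝ) := by exact_mod_cast hn
  have hπ : (3 : ℝ) < π := Real.pi_gt_three
  have hn2 : (1 : ℝ) ≤ (n : ℝ)^2 := by nlinarith
  have haπ : π ≤ a := by
    calc π = π * 1 := by ring
    _ ≤ π * (n:ℝ)^2 := by
        exact mul_le_mul_of_nonneg_left hn2 Real.pi_pos.le
  have ha3 : (3 : ℝ) < a := lt_of_lt_of_le hπ haπ
  have hbound : ‖∫ l in Set.Ioi a,
      (Real.exp (-l) : ℂ) * (l : ℂ) ^ ((β : ℂ) + Complex.I * k)‖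
      ≤ ∫ x in Ioi a, Real.exp (-x) * x^2 := by
    refine norm_integral_le_of_norm_le (aux_integral a).1 ?_
    filter_upwards [ae_restrict_mem measurableSet_Ioi] with x hx
    have hx1 : (1 : ℝ) < x := by simp only [mem_Ioi] at hx; linarith
    have hx0 : (0 : ℝ) < x := by linarith
    rw [norm_mul]
    have h1 : ‖((Real.exp (-x) : ℝ) : ℂ)‖ = Real.exp (-x) := by
      rw [Complex.norm_real, Real.norm_eq_abs, abs_of_pos (Real.exp_pos _)]
    have h2 : ‖(x : ℂ) ^ ((β : ℂ) + Complex.I * k)‖ = x ^ β := by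
      rw [Complex.norm_cpow_eq_rpow_re_of_pos hx0]
      simp
    rw [h1, h2]
    gcongr
    calc x ^ β ≤ x ^ (2:ℝ) := Real.rpow_le_rpow_of_exponent_le hx1.le (by linarith)
    _ = x ^ 2 := by rw [Real.rpow_two]
  have hval := (aux_integral a).2
  rw [hval] at hbound
  have hexp : (0:ℝ) < Real.exp (-a) := Real.exp_pos _
  have hq : (0:ℝ) < a^2 - 2*a - 2 := by nlinarith
  have h2 : (a^2 + 2*a + 2) * Real.exp (-a) < 2 * a^2 * Real.exp (-a) := by
    nlinarith [mul_pos hq hexp]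
  have hfin : 2 * a^2 * Real.exp (-a) = 2 * π ^ 2 * (n : ℝ) ^ 4 * Real.exp (-π * (n : ℝ) ^ 2) := by
    rw [ha]; ring_nf
  calc ‖∫ l in Set.Ioi a, (Real.exp (-l) : ℂ) * (l : ℂ) ^ ((β : ℂ) + Complex.I * k)‖
      ≤ _ := hbound
  _ < 2 * a^2 * Real.exp (-a) := h2
  _ = _ := hfin
end

section
/- With Ψ(y) = ∑_{n=1}^∞ e^{-πn²y}, the identity 1/2 + Ψ(1) + 4Ψ'(1) = 0 holds. -/
open Real

/-- `Ψ(y) = ∑_{n=1}^∞ e^{-πn²y}`. -/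
noncomputable def Psi (y : ℝ) : ℝ := ∑' n : ℕ, Real.exp (-π * ((n : ℝ) + 1) ^ 2 * y)

open Complex in
lemma psi_eq {t : ℝ} (ht : 0 < t) :
    Psi t = ((jacobiTheta ((t : ℂ) * I)).re - 1) / 2 := by
  have him : 0 < ((t : ℂ) * I).im := by simpa using ht
  have hs := hasSum_nat_jacobiTheta him
  have hre := Complex.reCLM.hasSum hs
  have hterm : ∀ n : ℕ, Complex.reCLM (cexp (π * I * ((n : ℂ) + 1) ^ 2 * ((t : ℂ) * I)))
      = Real.exp (-π * ((n : ℝ) + 1) ^ 2 * t) := by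
    intro n
    have : (π * I * ((n : ℂ) + 1) ^ 2 * ((t : ℂ) * I))
        = ((-π * ((n : ℝ) + 1) ^ 2 * t : ℝ) : ℂ) := by
      push_cast
      rw [show ((π : ℂ) * I * ((n : ℂ) + 1) ^ 2 * ((t : ℂ) * I))
        = (I * I) * (π * ((n : ℂ) + 1) ^ 2 * t) by ring, Complex.I_mul_I]
      ring
    simp only [Complex.reCLM_apply]
    rw [this, ← Complex.ofReal_exp, Complex.ofReal_re]
  rw [Psi]
  have hre' : HasSum (fun n : ℕ => Real.exp (-π * ((n : ℝ) + 1) ^ 2 * t))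
      (((jacobiTheta ((t : ℂ) * I) - 1) / 2).re) := by
    exact hre.congr_fun fun n => (hterm n).symm
  rw [hre'.tsum_eq]
  simp [Complex.div_re, Complex.sub_re]

open Complex in
lemma theta_real_funct_eq {t : ℝ} (ht : 0 < t) :
    (jacobiTheta (((1 / t : ℝ) : ℂ) * I)).re = Real.sqrt t * (jacobiTheta ((t : ℂ) * I)).re := by
  have him : 0 < ((t : ℂ) * I).im := by simpa using ht
  set τ : UpperHalfPlane := ⟨(t : ℂ) * I, him⟩ with hτ
  have h := jacobiTheta_S_smul τ
  rw [UpperHalfPlane.modular_S_smul] at h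
  have hcoe : ((UpperHalfPlane.mk (-(τ : ℂ))⁻¹ τ.im_inv_neg_coe_pos : UpperHalfPlane) : ℂ)
      = ((1 / t : ℝ) : ℂ) * I := by
    show (-((t : ℂ) * I))⁻¹ = ((1 / t : ℝ) : ℂ) * I
    rw [← neg_inv, mul_inv, Complex.inv_I]
    push_cast
    field_simp
  rw [hcoe] at h
  have hval : (-I * ((τ : ℂ))) = ((t : ℝ) : ℂ) := by
    show -I * ((t : ℂ) * I) = ((t : ℝ) : ℂ)
    rw [show -I * ((t : ℂ) * I) = -(I * I) * t by ring, Complex.I_mul_I]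
    ring
  rw [hval] at h
  have hpow : ((t : ℝ) : ℂ) ^ (1 / 2 : ℂ) = ((Real.sqrt t : ℝ) : ℂ) := by
    rw [show (1 / 2 : ℂ) = ((1 / 2 : ℝ) : ℂ) by norm_num, Real.sqrt_eq_rpow,
      Complex.ofReal_cpow ht.le]
  rw [hpow] at h
  rw [h, Complex.re_ofReal_mul]

open Complex in
lemma theta_hasDerivAt {t : ℝ} (ht : 0 < t) :
    HasDerivAt (fun s : ℝ => (jacobiTheta ((s : ℂ) * I)).re)
      ((deriv jacobiTheta ((t : ℂ) * I) * I).re) t := by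
  have him : 0 < ((t : ℂ) * I).im := by simpa using ht
  have h1 : HasDerivAt jacobiTheta (deriv jacobiTheta ((t : ℂ) * I)) ((t : ℂ) * I) :=
    (differentiableAt_jacobiTheta him).hasDerivAt
  have h2 : HasDerivAt (fun z : ℂ => z * I) I (t : ℂ) := by
    simpa using (hasDerivAt_id ((t : ℝ) : ℂ)).mul_const I
  have h3 : HasDerivAt (fun z : ℂ => jacobiTheta (z * I))
      (deriv jacobiTheta ((t : ℂ) * I) * I) (t : ℂ) := by
    have h3' := h1.comp ((t : ℝ) : ℂ) h2
    exact h3'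
  have h4 : HasDerivAt (fun s : ℝ => jacobiTheta ((s : ℂ) * I))
      (deriv jacobiTheta ((t : ℂ) * I) * I) t := h3.comp_ofReal
  simpa [Function.comp_def] using Complex.reCLM.hasFDerivAt.comp_hasDerivAt t h4

/-- `1/2 + Ψ(1) + 4Ψ'(1) = 0`, a consequence of the modular transformation of the
Jacobi theta function at `y = 1`. -/
theorem stmt_17 : 1 / 2 + Psi 1 + 4 * deriv Psi 1 = 0 := by
  set f : ℝ → ℝ := fun s => (jacobiTheta ((s : ℂ) * Complex.I)).re with hfdef
  obtain ⟨e, hf⟩ : ∃ e, HasDerivAt f e 1 := ⟨_, theta_hasDerivAt one_pos⟩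
  -- derivative of LHS of functional equation
  have hinv : HasDerivAt (fun s : ℝ => s⁻¹) (-1) 1 := by
    simpa using hasDerivAt_inv (one_ne_zero (α := ℝ))
  have hf' : HasDerivAt f e (1 : ℝ)⁻¹ := by rwa [inv_one]
  have hL : HasDerivAt (fun s : ℝ => f s⁻¹) (e * -1) 1 := hf'.comp 1 hinv
  -- derivative of RHS
  have hsq : HasDerivAt Real.sqrt (1 / 2) 1 := by
    simpa using Real.hasDerivAt_sqrt (one_ne_zero (α := ℝ))
  have hR : HasDerivAt (fun s : ℝ => Real.sqrt s * f s) (1 / 2 * f 1 + Real.sqrt 1 * e) 1 :=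
    hsq.mul hf
  -- the two functions agree near 1
  have hEq : (fun s : ℝ => f s⁻¹) =ᶠ[nhds 1] fun s : ℝ => Real.sqrt s * f s := by
    filter_upwards [Ioi_mem_nhds (zero_lt_one (α := ℝ))] with s hs
    have := theta_real_funct_eq hs
    simpa [hfdef, one_div] using this
  have hL' : HasDerivAt (fun s : ℝ => Real.sqrt s * f s) (e * -1) 1 :=
    hL.congr_of_eventuallyEq hEq.symm
  have hkey : e * -1 = 1 / 2 * f 1 + Real.sqrt 1 * e := hL'.unique hR
  rw [Real.sqrt_one] at hkey
  -- relate Psi to f near 1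
  have hPsiEq : Psi =ᶠ[nhds 1] fun s : ℝ => (f s - 1) / 2 := by
    filter_upwards [Ioi_mem_nhds (zero_lt_one (α := ℝ))] with s hs
    exact psi_eq hs
  have hderiv : deriv Psi 1 = e / 2 := by
    rw [hPsiEq.deriv_eq]
    exact ((hf.sub_const 1).div_const 2).deriv
  have hPsi1 : Psi 1 = (f 1 - 1) / 2 := psi_eq one_pos
  rw [hderiv, hPsi1]
  linarith
end
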